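/- Let L be a finite lattice, let ⊥ = x_0 < x_1 < ⋯ < x_k = ⊤ be a chain of left modular elements of L, and let λ be the labeling assigning to each cover relation y ⋖ z the unique index i such that x_{i+1}/x_i weakly separates y ⋖ z. Fix w ≤ z in L and let w = c_0 < c_1 < ⋯ < c_m = z be the chain defined by c_0 = w and c_{j+1} = c_j ⊔ (x_{i(j)+1} ⊓ z), where i(j) is the maximal index such that c_j ⊔ (x_{i(j)} ⊓ z) = c_j. Then a maximal chain w = d_0 ⋖ d_1 ⋖ ⋯ ⋖ d_n = z of the interval [w, z] has weakly increasing label sequence λ(d_0 ⋖ d_1) ≤ λ(d_1 ⋖ d_2) ≤ ⋯ ≤ λ(d_{n-1} ⋖ d_n) if and only if it contains every c_j, i.e. {c_0, …, c_m} ⊆ {d_0, …, d_n}. -/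

import Mathlib

/-- Lemma 2.5 of the paper.  Let `⊥ = x₀ < ⋯ < x_k = ⊤` be a chain of left
modular elements of a finite lattice `L`, and let `lab` be the labeling
assigning to each cover relation `y ⋖ z` the unique index `i` such that
`x_{i+1}/x_i` weakly separates it.  Fix `w ≤ z` and let
`w = c₀ < c₁ < ⋯ < c_m = z` be the chain with
`c_{j+1} = c_j ⊔ (x_{i(j)+1} ⊓ z)`, where `i(j)` is the maximal index with
`c_j ⊔ (x_{i(j)} ⊓ z) = c_j`.  Then a maximal chain `d` of `[w, z]` has weakly
increasing labels iff it contains every `c_j`. -/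
theorem increasing_iff_extends_c {L : Type*} [Lattice L]
    [BoundedOrder L] [Fintype L] {k : ℕ} (x : Fin (k + 1) → L)
    (hmono : StrictMono x) (hbot : x 0 = ⊥) (htop : x (Fin.last k) = ⊤)
    (hlm : ∀ i : Fin (k + 1), ∀ y z : L, y ≤ z →
      (y ⊔ x i) ⊓ z = y ⊔ (x i ⊓ z))
    -- the labeling by weak separation
    (lab : L → L → Fin k)
    (hlab : ∀ y z : L, y ⋖ z →
      x (lab y z).castSucc ⊓ z = x (lab y z).castSucc ⊓ y ∧
        x (lab y z).succ ⊔ z = x (lab y z).succ ⊔ y)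
    -- the interval `[w, z]`
    (w z : L) (hwz : w ≤ z)
    -- the chain `c` with its indices `ι j = i(j)`
    {m : ℕ} (c : Fin (m + 1) → L) (hc0 : c 0 = w) (hcm : c (Fin.last m) = z)
    (ι : Fin m → Fin k)
    (hι : ∀ j : Fin m, c j.castSucc ⊔ (x (ι j).castSucc ⊓ z) = c j.castSucc)
    (hιmax : ∀ j : Fin m, ∀ i : Fin (k + 1),
      c j.castSucc ⊔ (x i ⊓ z) = c j.castSucc → i ≤ (ι j).castSucc)
    (hcsucc : ∀ j : Fin m, c j.succ = c j.castSucc ⊔ (x (ι j).succ ⊓ z))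
    -- a maximal chain `d` of `[w, z]`
    {n : ℕ} (d : Fin (n + 1) → L) (hd0 : d 0 = w) (hdn : d (Fin.last n) = z)
    (hdcov : ∀ j : Fin n, d j.castSucc ⋖ d j.succ) :
    Monotone (fun j : Fin n => lab (d j.castSucc) (d j.succ)) ↔
      Set.range c ⊆ Set.range d := by
  classical
  have hxmono : Monotone x := hmono.monotone
  set l : Fin n → Fin k := fun s => lab (d s.castSucc) (d s.succ) with hl
  have hmeet : ∀ s : Fin n,
      x (l s).castSucc ⊓ d s.succ = x (l s).castSucc ⊓ d s.castSucc :=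
    fun s => (hlab _ _ (hdcov s)).1
  have hjoin : ∀ s : Fin n,
      x (l s).succ ⊔ d s.succ = x (l s).succ ⊔ d s.castSucc :=
    fun s => (hlab _ _ (hdcov s)).2
  have hdlt : ∀ s : Fin n, d s.castSucc < d s.succ := fun s => (hdcov s).lt
  have hdmono : StrictMono d := Fin.strictMono_iff_lt_succ.2 hdlt
  have hdz : ∀ s : Fin (n + 1), d s ≤ z := fun s => hdn ▸ hdmono.monotone (Fin.le_last s)
  have hcx : ∀ j : Fin m, x (ι j).castSucc ⊓ z ≤ c j.castSucc := fun j => sup_eq_left.1 (hι j)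
  have hcx' : ∀ j : Fin m, x (ι j).succ ⊓ z ≤ c j.succ := fun j => (hcsucc j) ▸ le_sup_right
  have hclt : ∀ j : Fin m, c j.castSucc < c j.succ := by
    intro j
    refine lt_of_le_of_ne ((hcsucc j) ▸ le_sup_left) (fun he => ?_)
    have h1 : c j.castSucc ⊔ (x (ι j).succ ⊓ z) = c j.castSucc := by
      rw [← hcsucc j, ← he]
    have := hιmax j (ι j).succ h1
    exact absurd this (not_le.2 Fin.castSucc_lt_succ)
  have hcmono : StrictMono c := Fin.strictMono_iff_lt_succ.2 hclt
  have hcz : ∀ j : Fin (m + 1), c j ≤ z := fun j => hcm ▸ hcmono.monotone (Fin.le_last j)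
  have hcw : ∀ j : Fin (m + 1), w ≤ c j := fun j => hc0 ▸ hcmono.monotone (Fin.zero_le j)
  -- threshold facts for cover steps of `d`
  have T2 : ∀ (s : Fin n) (i : Fin (k + 1)),
      x i ⊓ d s.succ ≤ d s.castSucc → i ≤ (l s).castSucc := by
    intro s i hi
    by_contra hni
    have hsucc_le : (l s).succ ≤ i := Fin.castSucc_lt_iff_succ_le.1 (not_le.1 hni)
    have h1 : x (l s).succ ⊓ d s.succ ≤ d s.castSucc :=
      le_trans (inf_le_inf_right _ (hxmono hsucc_le)) hi
    have h2 : d s.succ ≤ d s.castSucc ⊔ x (l s).succ := by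
      rw [sup_comm, ← hjoin s]; exact le_sup_right
    have h3 := hlm (l s).succ (d s.castSucc) (d s.succ) (hdlt s).le
    have h4 : d s.succ ≤ d s.castSucc ⊔ (x (l s).succ ⊓ d s.succ) := by
      rw [← h3]; exact le_inf h2 le_rfl
    exact absurd (le_trans h4 (sup_le le_rfl h1)) (hdlt s).not_ge
  have T3 : ∀ (s : Fin n) (i : Fin (k + 1)),
      d s.succ ≤ x i ⊔ d s.castSucc → (l s).succ ≤ i := by
    intro s i hi
    by_contra hni
    have hle : i ≤ (l s).castSucc := Fin.le_castSucc_iff.2 (not_le.1 hni)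
    have h2 : d s.succ ≤ d s.castSucc ⊔ x (l s).castSucc := by
      refine le_trans hi ?_
      rw [sup_comm]
      exact sup_le_sup_left (hxmono hle) _
    have h3 := hlm (l s).castSucc (d s.castSucc) (d s.succ) (hdlt s).le
    have h4 : d s.succ ≤ d s.castSucc := by
      have h5 : d s.succ ≤ (d s.castSucc ⊔ x (l s).castSucc) ⊓ d s.succ := le_inf h2 le_rfl
      rw [h3, hmeet s] at h5
      exact h5.trans (sup_le le_rfl inf_le_right)
    exact absurd h4 (hdlt s).not_ge
  have hstep : ∀ s : Fin n, d s.succ ≤ d s.castSucc ⊔ (x (l s).succ ⊓ z) := by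
    intro s
    have h2 : d s.succ ≤ d s.castSucc ⊔ x (l s).succ := by
      rw [sup_comm, ← hjoin s]; exact le_sup_right
    rw [← hlm (l s).succ (d s.castSucc) z (hdz s.castSucc)]
    exact le_inf h2 (hdz s.succ)
  -- key lemma: under monotone labels, `x (l t) ⊓ d s ≤ d t` for all `s`
  have hkey : Monotone l → ∀ (tt : Fin n) (s : Fin (n + 1)),
      x (l tt).castSucc ⊓ d s ≤ d tt.castSucc := by
    intro hm tt s
    induction s using Fin.induction with
    | zero => exact inf_le_right.trans (hdmono.monotone (Fin.zero_le _))
    | succ i ih =>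
      rcases le_or_gt i.succ tt.castSucc with hle | hlt
      · exact inf_le_right.trans (hdmono.monotone hle)
      · have hti : tt ≤ i := by
          rw [Fin.lt_def] at hlt
          simp only [Fin.coe_castSucc, Fin.val_succ] at hlt
          rw [Fin.le_def]; omega
        have hmon : (l tt).castSucc ≤ (l i).castSucc :=
          Fin.castSucc_le_castSucc_iff.2 (hm hti)
        calc x (l tt).castSucc ⊓ d i.succ
            = x (l tt).castSucc ⊓ (x (l i).castSucc ⊓ d i.succ) := by
              rw [← inf_assoc, inf_eq_left.2 (hxmono hmon)]
          _ = x (l tt).castSucc ⊓ (x (l i).castSucc ⊓ d i.castSucc) := by rw [hmeet i]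
          _ ≤ x (l tt).castSucc ⊓ d i.castSucc := inf_le_inf_left _ inf_le_right
          _ ≤ d tt.castSucc := ih
  have hkeyz : Monotone l → ∀ tt : Fin n, x (l tt).castSucc ⊓ z ≤ d tt.castSucc := by
    intro hm tt
    have := hkey hm tt (Fin.last n)
    rwa [hdn] at this
  constructor
  · -- increasing labels ⇒ chain contains every c j
    intro hm
    have main : ∀ j : Fin (m + 1), c j ∈ Set.range d := by
      intro j
      induction j using Fin.induction with
      | zero => exact ⟨0, by rw [hd0, hc0]⟩
      | succ j ih =>
        obtain ⟨t, ht⟩ := ih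
        have hQ : ∀ s : Fin (n + 1), t ≤ s → (d s ≤ c j.succ ∨ c j.succ ∈ Set.range d) := by
          intro s
          induction s using Fin.induction with
          | zero => exact fun _ => Or.inl (hd0 ▸ hcw _)
          | succ s ihs =>
            intro hts
            rcases le_or_gt t s.castSucc with hle | hgt
            · rcases ihs hle with hds | hmem
              · rcases eq_or_lt_of_le hds with heq | hltc
                · exact Or.inr ⟨s.castSucc, heq⟩
                · have h1 : c j.castSucc ≤ d s.castSucc := ht ▸ hdmono.monotone hle
                  have h2 : ι j ≤ l s := by
                    have hx : x (ι j).castSucc ⊓ d s.succ ≤ d s.castSucc :=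
                      le_trans (le_trans (inf_le_inf_left _ (hdz s.succ)) (hcx j)) h1
                    exact Fin.castSucc_le_castSucc_iff.1 (T2 s _ hx)
                  have h3 : l s ≤ ι j := by
                    by_contra hgt2
                    have hsl : (ι j).succ ≤ (l s).castSucc :=
                      Fin.succ_le_castSucc_iff.2 (not_le.1 hgt2)
                    have hb : x (ι j).succ ⊓ z ≤ d s.castSucc :=
                      le_trans (inf_le_inf_right _ (hxmono hsl)) (hkeyz hm s)
                    have hc : c j.succ ≤ d s.castSucc := by
                      rw [hcsucc j]; exact sup_le h1 hb
                    exact absurd hc hltc.not_ge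
                  have hls : l s = ι j := le_antisymm h3 h2
                  refine Or.inl ?_
                  calc d s.succ ≤ d s.castSucc ⊔ (x (l s).succ ⊓ z) := hstep s
                    _ ≤ c j.succ := sup_le hltc.le (by rw [hls]; exact hcx' j)
              · exact Or.inr hmem
            · have hteq : t = s.succ :=
                le_antisymm hts (Fin.castSucc_lt_iff_succ_le.1 hgt)
              refine Or.inl ?_
              rw [← hteq, ht]
              exact hcmono.monotone (Fin.castSucc_lt_succ (i := j)).le
        rcases hQ (Fin.last n) (Fin.le_last t) with hds | hmem
        · have hze : c j.succ = z := le_antisymm (hcz _) (hdn ▸ hds)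
          exact ⟨Fin.last n, by rw [hdn, hze]⟩
        · exact hmem
    rintro _ ⟨j, rfl⟩
    exact main j
  · -- chain contains every c j ⇒ increasing labels
    intro hsub
    have hex : ∀ j : Fin (m + 1), ∃ s, d s = c j := fun j => hsub ⟨j, rfl⟩
    choose t ht using hex
    have htmono : ∀ {j j' : Fin (m + 1)}, j ≤ j' → t j ≤ t j' := by
      intro j j' hj
      exact hdmono.le_iff_le.1 (by rw [ht, ht]; exact hcmono.monotone hj)
    have ht0 : t 0 = 0 := hdmono.injective (by rw [ht, hc0, hd0])
    have htlast : t (Fin.last m) = Fin.last n := hdmono.injective (by rw [ht, hcm, hdn])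
    have hblock : ∀ s : Fin n, ∃ j : Fin m,
        t j.castSucc ≤ s.castSucc ∧ s.succ ≤ t j.succ := by
      intro s
      set F : Finset (Fin (m + 1)) := Finset.univ.filter (fun j => t j ≤ s.castSucc) with hF
      have h0F : (0 : Fin (m + 1)) ∈ F := by
        simp only [hF, Finset.mem_filter, Finset.mem_univ, true_and, ht0]
        exact Fin.zero_le _
      have hFne : F.Nonempty := ⟨0, h0F⟩
      set j0 := F.max' hFne with hj0
      have hj0F : j0 ∈ F := F.max'_mem hFne
      have hj0le : t j0 ≤ s.castSucc := by
        simpa only [hF, Finset.mem_filter, Finset.mem_univ, true_and] using hj0F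
      have hvm : j0.val < m := by
        rcases lt_or_eq_of_le (Nat.lt_succ_iff.1 j0.isLt) with h | h
        · exact h
        · exfalso
          have he : j0 = Fin.last m := Fin.ext h
          rw [he, htlast] at hj0le
          exact absurd hj0le (not_le.2 (Fin.castSucc_lt_last s))
      refine ⟨⟨j0.val, hvm⟩, ?_, ?_⟩
      · have hjc : (⟨j0.val, hvm⟩ : Fin m).castSucc = j0 := Fin.ext rfl
        rw [hjc]; exact hj0le
      · have hnot : (⟨j0.val, hvm⟩ : Fin m).succ ∉ F := by
          intro hmem
          have hle2 := F.le_max' _ hmem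
          rw [← hj0] at hle2
          have hcontra : j0.val + 1 ≤ j0.val := by
            simpa [Fin.le_def, Fin.val_succ] using hle2
          omega
        have hns : ¬ t (⟨j0.val, hvm⟩ : Fin m).succ ≤ s.castSucc := by
          simpa only [hF, Finset.mem_filter, Finset.mem_univ, true_and] using hnot
        exact Fin.castSucc_lt_iff_succ_le.1 (not_le.1 hns)
    have hlabel : ∀ (s : Fin n) (j : Fin m),
        t j.castSucc ≤ s.castSucc → s.succ ≤ t j.succ → l s = ι j := by
      intro s j hA hB
      have h1 : c j.castSucc ≤ d s.castSucc := (ht _) ▸ hdmono.monotone hA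
      have h2 : d s.succ ≤ c j.succ := (ht _) ▸ hdmono.monotone hB
      have hge : ι j ≤ l s := by
        have hx : x (ι j).castSucc ⊓ d s.succ ≤ d s.castSucc :=
          le_trans (le_trans (inf_le_inf_left _ (hdz s.succ)) (hcx j)) h1
        exact Fin.castSucc_le_castSucc_iff.1 (T2 s _ hx)
      have hle : l s ≤ ι j := by
        have hx : d s.succ ≤ x (ι j).succ ⊔ d s.castSucc := by
          refine le_trans h2 ?_
          rw [hcsucc j]
          exact sup_le (h1.trans le_sup_right) (inf_le_left.trans le_sup_left)
        exact Fin.succ_le_succ_iff.1 (T3 s _ hx)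
      exact le_antisymm hle hge
    have hιmono : ∀ {j j' : Fin m}, j < j' → ι j < ι j' := by
      intro j j' hj
      have h1 : x (ι j).succ ⊓ z ≤ c j'.castSucc :=
        le_trans (hcx' j) (hcmono.monotone (Fin.succ_le_castSucc_iff.2 hj))
      have := hιmax j' (ι j).succ (sup_eq_left.2 h1)
      exact Fin.succ_le_castSucc_iff.1 this
    intro a b hab
    obtain ⟨ja, hA1, hA2⟩ := hblock a
    obtain ⟨jb, hB1, hB2⟩ := hblock b
    have hjab : ja ≤ jb := by
      by_contra hnb
      have hltj : jb < ja := not_le.1 hnb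
      have hst : a.castSucc < t jb.succ :=
        lt_of_lt_of_le
          (lt_of_le_of_lt (Fin.castSucc_le_castSucc_iff.2 hab) (Fin.castSucc_lt_succ (i := b))) hB2
      have hts : t jb.succ ≤ t ja.castSucc := htmono (Fin.succ_le_castSucc_iff.2 hltj)
      exact absurd (lt_of_le_of_lt (hts.trans hA1) hst) (lt_irrefl _)
    show l a ≤ l b
    rw [hlabel a ja hA1 hA2, hlabel b jb hB1 hB2]
    rcases eq_or_lt_of_le hjab with he | hlj
    · rw [he]
    · exact (hιmono hlj).le
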